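/- There exists a universal constant C₀ > 0 with the following property. Let s₁, s₂ ∈ {+1, −1}, let k, k₁, k₂ ∈ ℕ and j, j₁, j₂ ∈ ℤ, and let φ, u₁, u₂ : ℝ × ℝ² → ℂ be Schwartz functions whose space-time Fourier transforms satisfy supp φ̂ ⊆ A_k ∩ B^{+1}_j and supp ûᵢ ⊆ A_{kᵢ} ∩ B^{sᵢ}_{jᵢ} for i = 1, 2. If max(j, j₁, j₂) ≤ −min(k, k₁, k₂) − C₀, then ∫_{ℝ×ℝ²} φ(t,x)·u₁(t,x)·conj(u₂(t,x)) dt dx = 0. -/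

import Mathlib

noncomputable section

open MeasureTheory
open scoped ENNReal

/-- ℝ² as a Euclidean space. -/
abbrev E2 := EuclideanSpace ℝ (Fin 2)

/-- Space-time ℝ_t × ℝ²_x (equivalently its Fourier dual ℝ_τ × ℝ²_ξ) as ℝ³,
with the time (resp. τ) variable being the 0-th coordinate. -/
abbrev E3 := EuclideanSpace ℝ (Fin 3)

/-- The spatial (frequency) part ξ ∈ ℝ² of a space-time point `z = (τ, ξ)`. -/
def xiv (z : E3) : E2 := (WithLp.equiv 2 (Fin 2 → ℝ)).symm ![z 1, z 2]

/-- The Japanese bracket `⟨ξ⟩ = √(1 + |ξ|²)` of the frequency part. -/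
def jxi (z : E3) : ℝ := Real.sqrt (1 + ‖xiv z‖ ^ 2)

/-- The dyadic frequency region `A_k = {(τ,ξ) : |ξ| ≤ 2^{k+2}, and |ξ| ≥ 2^{k-2} if k ≥ 1}`. -/
def Ak (k : ℕ) : Set E3 :=
  {z | ‖xiv z‖ ≤ (2 : ℝ) ^ ((k : ℝ) + 2) ∧ (1 ≤ k → (2 : ℝ) ^ ((k : ℝ) - 2) ≤ ‖xiv z‖)}

/-- The dyadic modulation region `B^s_j = {(τ,ξ) : 2^{j-2} ≤ |τ + s⟨ξ⟩| ≤ 2^{j+2}}`. -/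
def Bsj (s : ℝ) (j : ℤ) : Set E3 :=
  {z | (2 : ℝ) ^ ((j : ℝ) - 2) ≤ |z 0 + s * jxi z| ∧ |z 0 + s * jxi z| ≤ (2 : ℝ) ^ ((j : ℝ) + 2)}

namespace Stmt8Aux

def J (u : E2) : ℝ := Real.sqrt (1 + ‖u‖ ^ 2)

lemma one_le_J (u : E2) : 1 ≤ J u := by
  have : Real.sqrt 1 ≤ Real.sqrt (1 + ‖u‖ ^ 2) :=
    Real.sqrt_le_sqrt (le_add_of_nonneg_right (by positivity))
  simpa [J, Real.sqrt_one] using this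

lemma J_pos (u : E2) : 0 < J u := lt_of_lt_of_le one_pos (one_le_J u)

lemma sqrt_mono_arg {x y : ℝ} (hx : 0 ≤ x) (h : x ≤ y) :
    Real.sqrt (1 + x ^ 2) ≤ Real.sqrt (1 + y ^ 2) := by
  apply Real.sqrt_le_sqrt
  nlinarith

lemma key_scalar {x y : ℝ} (hx : 0 ≤ x) (hxy : x ≤ y) :
    1 / (2 * Real.sqrt (1 + x ^ 2)) ≤
      Real.sqrt (1 + x ^ 2) + Real.sqrt (1 + y ^ 2) - Real.sqrt (1 + (x + y) ^ 2) := by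
  have hy : (0:ℝ) ≤ y := le_trans hx hxy
  set s : ℝ := Real.sqrt (1 + y ^ 2) with hs
  set t : ℝ := Real.sqrt (1 + x ^ 2) with ht
  have hs2 : s ^ 2 = 1 + y ^ 2 := Real.sq_sqrt (by positivity)
  have ht2 : t ^ 2 = 1 + x ^ 2 := Real.sq_sqrt (by positivity)
  have hsy : y ≤ s := by nlinarith [Real.sqrt_nonneg (1 + y ^ 2)]
  have htx : x ≤ t := by nlinarith [Real.sqrt_nonneg (1 + x ^ 2)]
  have ht0 : 0 < t := lt_of_lt_of_le one_pos (by nlinarith)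
  have h1 : Real.sqrt (1 + (x + y) ^ 2) ≤ x + s := by
    have : 1 + (x + y) ^ 2 ≤ (x + s) ^ 2 := by nlinarith
    calc Real.sqrt (1 + (x + y) ^ 2) ≤ Real.sqrt ((x + s) ^ 2) := Real.sqrt_le_sqrt this
      _ = x + s := by rw [Real.sqrt_sq (by positivity)]
  have h2 : t - x = 1 / (t + x) := by
    field_simp
    nlinarith
  have h3 : 1 / (t + x) ≥ 1 / (2 * t) := by
    apply one_div_le_one_div_of_le
    · positivity
    · nlinarith
  linarith

lemma key_vec_aux {u v : E2} (huv : ‖u‖ ≤ ‖v‖) :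
    1 / (2 * J u) ≤ J u + J v - J (u + v) := by
  have h1 : J (u + v) ≤ Real.sqrt (1 + (‖u‖ + ‖v‖) ^ 2) :=
    sqrt_mono_arg (norm_nonneg _) (norm_add_le _ _)
  have h2 := key_scalar (norm_nonneg u) huv
  simp only [J] at h1 ⊢
  linarith

lemma key_vec (u v : E2) :
    1 / (2 * min (J u) (min (J v) (J (u + v)))) ≤ J u + J v - J (u + v) := by
  set m := min (J u) (min (J v) (J (u + v))) with hm
  have hm1 : 1 ≤ m := le_min (one_le_J _) (le_min (one_le_J _) (one_le_J _))
  rcases le_or_gt (min (J u) (J v)) (J (u + v)) with hle | hlt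
  · rcases le_total ‖u‖ ‖v‖ with h | h
    · have hJ : J u ≤ J v := sqrt_mono_arg (norm_nonneg _) h
      have hus : J u ≤ J (u + v) := le_trans (le_of_eq (min_eq_left hJ).symm) hle
      have hmeq : m = J u := le_antisymm (min_le_left _ _) (le_min le_rfl (le_min hJ hus))
      rw [hmeq]
      exact key_vec_aux h
    · have hJ : J v ≤ J u := sqrt_mono_arg (norm_nonneg _) h
      have hus : J v ≤ J (u + v) := le_trans (le_of_eq (min_eq_right hJ).symm) hle
      have hmeq : m = J v := le_antisymm
        (le_trans (min_le_right _ _) (min_le_left _ _)) (le_min hJ (le_min le_rfl hus))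
      rw [hmeq]
      have := key_vec_aux h
      rw [add_comm v u] at this
      linarith
  · have h1 : 1 / (2 * m) ≤ 1 / 2 := by
      apply one_div_le_one_div_of_le
      · norm_num
      · linarith
    have h2 : J (u + v) < J u := lt_of_lt_of_le hlt (min_le_left _ _)
    have := one_le_J v
    linarith

end Stmt8Aux

namespace Stmt8Aux2
open Stmt8Aux

lemma xiv_add (a b : E3) : xiv (a + b) = xiv a + xiv b := by
  ext i
  simp only [xiv, WithLp.equiv_symm_apply, PiLp.add_apply]
  fin_cases i <;> simp

lemma xiv_neg (a : E3) : xiv (-a) = -(xiv a) := by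
  ext i
  simp only [xiv, WithLp.equiv_symm_apply, PiLp.neg_apply]
  fin_cases i <;> simp

lemma jxi_eq (z : E3) : jxi z = J (xiv z) := rfl

lemma one_le_jxi (z : E3) : 1 ≤ jxi z := one_le_J _

/-- The resonance estimate. -/
lemma resonance {s₁ s₂ : ℝ} (hs₁ : s₁ = 1 ∨ s₁ = -1) (hs₂ : s₂ = 1 ∨ s₂ = -1)
    (ζ ζ₁ : E3) :
    1 / (2 * min (jxi ζ) (min (jxi ζ₁) (jxi (ζ + ζ₁)))) ≤
      |jxi ζ + s₁ * jxi ζ₁ - s₂ * jxi (ζ + ζ₁)| := by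
  set a := jxi ζ with ha
  set b := jxi ζ₁ with hb
  set c := jxi (ζ + ζ₁) with hc
  have h1a : 1 ≤ a := one_le_jxi _
  have h1b : 1 ≤ b := one_le_jxi _
  have h1c : 1 ≤ c := one_le_jxi _
  have hm1 : (1:ℝ) ≤ min a (min b c) := le_min h1a (le_min h1b h1c)
  have hmpos : (0:ℝ) < min a (min b c) := lt_of_lt_of_le one_pos hm1
  rcases hs₁ with rfl | rfl <;> rcases hs₂ with rfl | rfl
  · -- (+,+): a + b - c
    have := key_vec (xiv ζ) (xiv ζ₁)
    rw [← xiv_add, ← jxi_eq, ← jxi_eq, ← jxi_eq, ← ha, ← hb, ← hc] at this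
    calc 1 / (2 * min a (min b c)) ≤ a + b - c := this
      _ ≤ |a + 1 * b - 1 * c| := by rw [one_mul, one_mul]; exact le_abs_self _
  · -- (+,-): a + b + c ≥ 3
    have habs : a + 1 * b - (-1) * c = a + b + c := by ring
    rw [habs]
    have h3 : (3:ℝ) ≤ a + b + c := by linarith
    have hhalf : 1 / (2 * min a (min b c)) ≤ 1 / 2 := by
      apply one_div_le_one_div_of_le <;> linarith
    calc 1 / (2 * min a (min b c)) ≤ 1/2 := hhalf
      _ ≤ a + b + c := by linarith
      _ ≤ |a + b + c| := le_abs_self _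
  · -- (-,+): |a - b - c|, use b + c - a ≥ gap with ξ = ξ₂ + (-ξ₁)
    have := key_vec (xiv (ζ + ζ₁)) (xiv (-ζ₁))
    have e : ζ + ζ₁ + -ζ₁ = ζ := by abel
    have hsum : xiv (ζ + ζ₁) + xiv (-ζ₁) = xiv ζ := by
      rw [← xiv_add, e]
    rw [hsum, xiv_neg, ← jxi_eq, ← jxi_eq] at this
    rw [show J (-(xiv ζ₁)) = b by rw [hb, jxi_eq, J, J, norm_neg]] at this
    rw [← ha, ← hc] at this
    -- this : 1 / (2 * min c (min b a)) ≤ c + b - a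
    have hminle : min c (min b a) ≤ min a (min b c) :=
      le_min (le_trans (min_le_right _ _) (min_le_right _ _))
        (le_min (le_trans (min_le_right _ _) (min_le_left _ _)) (min_le_left _ _))
    have h2 : 1 / (2 * min a (min b c)) ≤ 1 / (2 * min c (min b a)) := by
      apply one_div_le_one_div_of_le
      · have : (1:ℝ) ≤ min c (min b a) := le_min h1c (le_min h1b h1a)
        linarith
      · linarith
    have habs : |a + (-1) * b - 1 * c| = |a - b - c| := by ring_nf
    rw [habs]
    calc 1 / (2 * min a (min b c)) ≤ c + b - a := le_trans h2 this
      _ = -(a - b - c) := by ring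
      _ ≤ |a - b - c| := neg_le_abs _
  · -- (-,-): |a - b + c|, use a + c - b ≥ gap with ξ₁ = ξ + ξ₂ - ξ ... ξ₁ = ξ₂ + (-ξ)
    have := key_vec (xiv (ζ + ζ₁)) (xiv (-ζ))
    have e : ζ + ζ₁ + -ζ = ζ₁ := by abel
    have hsum : xiv (ζ + ζ₁) + xiv (-ζ) = xiv ζ₁ := by
      rw [← xiv_add, e]
    rw [hsum, xiv_neg, ← jxi_eq, ← jxi_eq] at this
    rw [show J (-(xiv ζ)) = a by rw [ha, jxi_eq, J, J, norm_neg]] at this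
    rw [← hb, ← hc] at this
    have hminle : min c (min a b) ≤ min a (min b c) :=
      le_min (le_trans (min_le_right _ _) (min_le_left _ _))
        (le_min (le_trans (min_le_right _ _) (min_le_right _ _)) (min_le_left _ _))
    have h2 : 1 / (2 * min a (min b c)) ≤ 1 / (2 * min c (min a b)) := by
      apply one_div_le_one_div_of_le
      · have : (1:ℝ) ≤ min c (min a b) := le_min h1c (le_min h1a h1b)
        linarith
      · linarith
    have habs : |a + (-1) * b - (-1) * c| = |a - b + c| := by ring_nf
    rw [habs]
    calc 1 / (2 * min a (min b c)) ≤ c + a - b := le_trans h2 this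
      _ = a - b + c := by ring
      _ ≤ |a - b + c| := le_abs_self _

end Stmt8Aux2

namespace Stmt8Aux3
open Stmt8Aux Stmt8Aux2

lemma rpow_succ (x : ℝ) : (2:ℝ) ^ (x + 1) = 2 ^ x * 2 := by
  rw [Real.rpow_add two_pos, Real.rpow_one]

lemma rpow_two' : (2:ℝ) ^ (2:ℝ) = 4 := by
  have h : (2:ℝ) ^ ((1:ℝ) + 1) = 4 := by rw [rpow_succ, Real.rpow_one]; norm_num
  rw [show (2:ℝ) = (1:ℝ) + 1 from by norm_num] at h ⊢
  convert h using 2 <;> norm_num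

lemma jxi_le {w : E3} {n : ℕ} (h : ‖xiv w‖ ≤ (2:ℝ) ^ ((n : ℝ) + 2)) :
    jxi w ≤ (2:ℝ) ^ ((n : ℝ) + 3) := by
  set t : ℝ := (2:ℝ) ^ ((n : ℝ) + 2) with ht
  have ht4 : (4:ℝ) ≤ t := by
    have h2n : (2:ℝ) ≤ (n : ℝ) + 2 := by
      have := Nat.cast_nonneg (α := ℝ) n
      linarith
    have : (2:ℝ) ^ (2:ℝ) ≤ (2:ℝ) ^ ((n : ℝ) + 2) :=
      Real.rpow_le_rpow_of_exponent_le one_le_two h2n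
    rwa [rpow_two'] at this
  have h0 : 0 ≤ ‖xiv w‖ := norm_nonneg _
  have hb : 1 + ‖xiv w‖ ^ 2 ≤ (2 * t) ^ 2 := by nlinarith
  have h1 : jxi w ≤ 2 * t := by
    rw [jxi]
    calc Real.sqrt (1 + ‖xiv w‖ ^ 2) ≤ Real.sqrt ((2 * t) ^ 2) := Real.sqrt_le_sqrt hb
      _ = 2 * t := Real.sqrt_sq (by positivity)
  have h2 : (2:ℝ) ^ ((n : ℝ) + 3) = t * 2 := by
    rw [show (n : ℝ) + 3 = ((n : ℝ) + 2) + 1 by ring, rpow_succ]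
  linarith

lemma stepA {s₁ s₂ : ℝ} (hs₁ : s₁ = 1 ∨ s₁ = -1) (hs₂ : s₂ = 1 ∨ s₂ = -1)
    {k k₁ k₂ : ℕ} {j j₁ j₂ : ℤ}
    (hmax : ((max j (max j₁ j₂) : ℤ) : ℝ) ≤ -((min k (min k₁ k₂) : ℕ) : ℝ) - 8)
    {ζ ζ₁ : E3} (hζ : ζ ∈ Ak k ∩ Bsj 1 j) (hζ₁ : ζ₁ ∈ Ak k₁ ∩ Bsj s₁ j₁)
    (hζ₂ : ζ + ζ₁ ∈ Ak k₂ ∩ Bsj s₂ j₂) : False := by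
  set K : ℕ := min k (min k₁ k₂) with hK
  set M : ℝ := min (jxi ζ) (min (jxi ζ₁) (jxi (ζ + ζ₁))) with hM
  have hMpos : 0 < M :=
    lt_of_lt_of_le one_pos (le_min (one_le_jxi _) (le_min (one_le_jxi _) (one_le_jxi _)))
  -- bound on M
  have hMle : M ≤ (2:ℝ) ^ ((K : ℝ) + 3) := by
    have hcase : K = k ∨ K = k₁ ∨ K = k₂ := by omega
    rcases hcase with hEq | hEq | hEq
    · calc M ≤ jxi ζ := min_le_left _ _
        _ ≤ (2:ℝ) ^ ((k : ℝ) + 3) := jxi_le hζ.1.1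
        _ = (2:ℝ) ^ ((K : ℝ) + 3) := by rw [hEq]
    · calc M ≤ jxi ζ₁ := le_trans (min_le_right _ _) (min_le_left _ _)
        _ ≤ (2:ℝ) ^ ((k₁ : ℝ) + 3) := jxi_le hζ₁.1.1
        _ = (2:ℝ) ^ ((K : ℝ) + 3) := by rw [hEq]
    · calc M ≤ jxi (ζ + ζ₁) := le_trans (min_le_right _ _) (min_le_right _ _)
        _ ≤ (2:ℝ) ^ ((k₂ : ℝ) + 3) := jxi_le hζ₂.1.1
        _ = (2:ℝ) ^ ((K : ℝ) + 3) := by rw [hEq]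
  -- modulation bounds
  have hp := hζ.2.2
  have hq := hζ₁.2.2
  have hr := hζ₂.2.2
  have hadd0 : (ζ + ζ₁) 0 = ζ 0 + ζ₁ 0 := rfl
  -- each 2^(j_i+2) ≤ 2^(-K-6)
  have hexp : ∀ j' : ℤ, j' ≤ max j (max j₁ j₂) →
      (2:ℝ) ^ ((j' : ℝ) + 2) ≤ (2:ℝ) ^ (-(K : ℝ) - 6) := by
    intro j' hj'
    apply Real.rpow_le_rpow_of_exponent_le one_le_two
    have : (j' : ℝ) ≤ ((max j (max j₁ j₂) : ℤ) : ℝ) := by exact_mod_cast hj'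
    linarith
  have hpb : |ζ 0 + 1 * jxi ζ| ≤ (2:ℝ) ^ (-(K : ℝ) - 6) :=
    le_trans hp (hexp j (le_max_left _ _))
  have hqb : |ζ₁ 0 + s₁ * jxi ζ₁| ≤ (2:ℝ) ^ (-(K : ℝ) - 6) :=
    le_trans hq (hexp j₁ (le_trans (le_max_left _ _) (le_max_right _ _)))
  have hrb : |(ζ + ζ₁) 0 + s₂ * jxi (ζ + ζ₁)| ≤ (2:ℝ) ^ (-(K : ℝ) - 6) :=
    le_trans hr (hexp j₂ (le_trans (le_max_right _ _) (le_max_right _ _)))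
  -- resonance identity
  set R : ℝ := jxi ζ + s₁ * jxi ζ₁ - s₂ * jxi (ζ + ζ₁) with hR
  have hRid : R = (ζ 0 + 1 * jxi ζ) + (ζ₁ 0 + s₁ * jxi ζ₁)
      - ((ζ + ζ₁) 0 + s₂ * jxi (ζ + ζ₁)) := by
    rw [hR, hadd0]; ring
  have hRub : |R| ≤ 3 * (2:ℝ) ^ (-(K : ℝ) - 6) := by
    rw [hRid]
    calc |(ζ 0 + 1 * jxi ζ) + (ζ₁ 0 + s₁ * jxi ζ₁) - ((ζ + ζ₁) 0 + s₂ * jxi (ζ + ζ₁))|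
        ≤ |(ζ 0 + 1 * jxi ζ) + (ζ₁ 0 + s₁ * jxi ζ₁)| + |(ζ + ζ₁) 0 + s₂ * jxi (ζ + ζ₁)| :=
          abs_sub _ _
      _ ≤ |ζ 0 + 1 * jxi ζ| + |ζ₁ 0 + s₁ * jxi ζ₁| + |(ζ + ζ₁) 0 + s₂ * jxi (ζ + ζ₁)| := by
          have := abs_add_le (ζ 0 + 1 * jxi ζ) (ζ₁ 0 + s₁ * jxi ζ₁)
          linarith
      _ ≤ 3 * (2:ℝ) ^ (-(K : ℝ) - 6) := by linarith
  have hRlb : (2:ℝ) ^ (-(K : ℝ) - 4) ≤ |R| := by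
    have h1 := resonance hs₁ hs₂ ζ ζ₁
    rw [← hM, ← hR] at h1
    have h2 : 1 / (2 * (2:ℝ) ^ ((K : ℝ) + 3)) ≤ 1 / (2 * M) := by
      apply one_div_le_one_div_of_le
      · linarith
      · linarith
    have h3 : 1 / (2 * (2:ℝ) ^ ((K : ℝ) + 3)) = (2:ℝ) ^ (-(K : ℝ) - 4) := by
      rw [show (2:ℝ) * (2:ℝ) ^ ((K : ℝ) + 3) = (2:ℝ) ^ ((K : ℝ) + 4) by
        rw [show (K : ℝ) + 4 = ((K : ℝ) + 3) + 1 by ring, rpow_succ]; ring]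
      rw [one_div, ← Real.rpow_neg (by norm_num), show -((K : ℝ) + 4) = -(K : ℝ) - 4 by ring]
    linarith
  have hsplit : (2:ℝ) ^ (-(K : ℝ) - 4) = 4 * (2:ℝ) ^ (-(K : ℝ) - 6) := by
    rw [show -(K : ℝ) - 4 = ((-(K : ℝ) - 6) + 1) + 1 by ring, rpow_succ, rpow_succ]
    ring
  have hpos : (0:ℝ) < (2:ℝ) ^ (-(K : ℝ) - 6) := Real.rpow_pos_of_pos two_pos _
  linarith [hRlb, hRub, hsplit]

end Stmt8Aux3

namespace Stmt8Fourier
open FourierTransform RealInnerProductSpace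

lemma innerflip : (innerₗ E3).flip = innerₗ E3 := by
  apply LinearMap.ext; intro x; apply LinearMap.ext; intro y
  simpa using real_inner_comm y x

/-- Multiplication formula for the Fourier transform. -/
lemma mulform {f g : E3 → ℂ} (hf : Integrable f) (hg : Integrable g) :
    ∫ ξ, (𝓕 f ξ) * g ξ = ∫ x, f x * 𝓕 g x := by
  have h := VectorFourier.integral_fourierIntegral_smul_eq_flip
    (μ := (volume : Measure E3)) (ν := (volume : Measure E3)) (L := innerₗ E3)
    Real.continuous_fourierChar (by simpa using continuous_inner (𝕜 := ℝ) (E := E3)) hf hg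
  rw [innerflip] at h
  simp only [smul_eq_mul] at h
  exact h

lemma schwartz_fourier_integrable (f : SchwartzMap E3 ℂ) : Integrable (𝓕 ⇑f) := by
  have := (SchwartzMap.fourierTransformCLM ℂ f).integrable (μ := volume)
  simpa [SchwartzMap.fourierTransformCLM_apply, SchwartzMap.fourier_coe] using this

lemma schwartz_inversion (f : SchwartzMap E3 ℂ) :
    𝓕 (fun ζ => 𝓕 ⇑f (-ζ)) = ⇑f := by
  rw [← Real.fourierInv_eq_fourier_comp_neg]
  exact f.continuous.fourierInv_fourier_eq f.integrable (schwartz_fourier_integrable f)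

lemma conj_exp_aux (r : ℝ) (w : ℂ) :
    Complex.exp (↑(-2 * Real.pi * r) * Complex.I) * (starRingEnd ℂ) w
      = (starRingEnd ℂ) (Complex.exp (↑(2 * Real.pi * r) * Complex.I) * w) := by
  rw [map_mul, ← Complex.exp_conj, map_mul, Complex.conj_ofReal, Complex.conj_I]
  push_cast
  ring_nf

lemma fourier_conj (u : SchwartzMap E3 ℂ) :
    𝓕 (fun ζ => (starRingEnd ℂ) (𝓕 ⇑u ζ)) = fun z => (starRingEnd ℂ) (u z) := by
  funext z
  rw [Real.fourier_eq']
  have : ∀ ζ : E3, Complex.exp (↑(-2 * Real.pi * ⟪ζ, z⟫) * Complex.I) •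
      (starRingEnd ℂ) (𝓕 ⇑u ζ)
      = (starRingEnd ℂ) (Complex.exp (↑(2 * Real.pi * ⟪ζ, z⟫) * Complex.I) • (𝓕 ⇑u ζ)) := by
    intro ζ
    rw [smul_eq_mul, smul_eq_mul]
    exact conj_exp_aux _ _
  rw [integral_congr_ae (Filter.Eventually.of_forall this), integral_conj]
  congr 1
  rw [← Real.fourierInv_eq']
  have h := u.continuous.fourierInv_fourier_eq u.integrable (schwartz_fourier_integrable u)
  rw [h]

lemma integrable_conj' {f : E3 → ℂ} (hf : Integrable f) :
    Integrable (fun x => (starRingEnd ℂ) (f x)) :=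
  (Complex.conjLIE.toContinuousLinearEquiv.toContinuousLinearMap).integrable_comp hf

lemma schwartz_bdd_mul (φ : SchwartzMap E3 ℂ) {g : E3 → ℂ} (hg : Integrable g) :
    Integrable (fun z => φ z * g z) :=
  hg.bdd_mul φ.continuous.aestronglyMeasurable
    (Filter.Eventually.of_forall fun x => SchwartzMap.norm_le_seminorm ℝ φ x)

lemma modulated_integrable (u : SchwartzMap E3 ℂ) (ξ : E3) :
    Integrable (fun z => Complex.exp (↑(-2 * Real.pi * ⟪z, ξ⟫) * Complex.I) * u z) :=
  u.integrable.bdd_mul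
    (Continuous.aestronglyMeasurable (by
      apply Complex.continuous_exp.comp
      apply Continuous.mul _ continuous_const
      apply Complex.continuous_ofReal.comp
      exact continuous_const.mul (Continuous.inner continuous_id continuous_const)))
    (Filter.Eventually.of_forall fun x => le_of_eq (Complex.norm_exp_ofReal_mul_I _))

lemma modulated_fourier (u : SchwartzMap E3 ℂ) (ξ ζ : E3) :
    𝓕 (fun z => Complex.exp (↑(-2 * Real.pi * ⟪z, ξ⟫) * Complex.I) * u z) ζ
      = 𝓕 ⇑u (ζ + ξ) := by
  rw [Real.fourier_eq', Real.fourier_eq']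
  congr 1
  funext z
  rw [smul_eq_mul, smul_eq_mul, ← mul_assoc, ← Complex.exp_add]
  congr 2
  rw [inner_add_right]
  push_cast
  ring

/-- Fourier transform of a product, as an integral against shifted transforms. -/
lemma fourier_mul_eq (φ u₁ : SchwartzMap E3 ℂ) (ξ : E3) :
    𝓕 (fun z => φ z * u₁ z) ξ = ∫ ζ, 𝓕 ⇑φ (-ζ) * 𝓕 ⇑u₁ (ζ + ξ) := by
  set h : E3 → ℂ := fun z => Complex.exp (↑(-2 * Real.pi * ⟪z, ξ⟫) * Complex.I) * u₁ z
    with hh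
  have hint : Integrable h := modulated_integrable u₁ ξ
  have hg₀ : Integrable (fun ζ => 𝓕 ⇑φ (-ζ)) := (schwartz_fourier_integrable φ).comp_neg
  have e1 : 𝓕 (fun z => φ z * u₁ z) ξ = ∫ z, φ z * h z := by
    rw [Real.fourier_eq']
    congr 1
    funext z
    rw [smul_eq_mul, hh]
    ring
  have e2 : ∫ ζ, (𝓕 (fun ζ => 𝓕 ⇑φ (-ζ))) ζ * h ζ = ∫ x, (fun ζ => 𝓕 ⇑φ (-ζ)) x * 𝓕 h x :=
    mulform hg₀ hint
  rw [schwartz_inversion φ] at e2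
  rw [e1, e2]
  congr 1
  funext ζ
  rw [hh, modulated_fourier u₁ ξ ζ]

end Stmt8Fourier

theorem stmt8 :
    ∃ C₀ : ℝ, 0 < C₀ ∧ ∀ (s₁ s₂ : ℝ), (s₁ = 1 ∨ s₁ = -1) → (s₂ = 1 ∨ s₂ = -1) →
      ∀ (k k₁ k₂ : ℕ) (j j₁ j₂ : ℤ) (φ u₁ u₂ : SchwartzMap E3 ℂ),
      Function.support (VectorFourier.fourierIntegral Real.fourierChar volume (innerₗ E3) ⇑φ) ⊆ Ak k ∩ Bsj 1 j →
      Function.support (VectorFourier.fourierIntegral Real.fourierChar volume (innerₗ E3) ⇑u₁) ⊆ Ak k₁ ∩ Bsj s₁ j₁ →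
      Function.support (VectorFourier.fourierIntegral Real.fourierChar volume (innerₗ E3) ⇑u₂) ⊆ Ak k₂ ∩ Bsj s₂ j₂ →
      ((max j (max j₁ j₂) : ℝ) ≤ -(min k (min k₁ k₂) : ℝ) - C₀) →
      ∫ z : E3, φ z * u₁ z * (starRingEnd ℂ) (u₂ z) = 0 := by
  refine ⟨8, by norm_num, ?_⟩
  intro s₁ s₂ hs₁ hs₂ k k₁ k₂ j j₁ j₂ φ u₁ u₂ hφ hu₁ hu₂ hmax
  open FourierTransform in
  have hmax' : ((max j (max j₁ j₂) : ℤ) : ℝ) ≤ -((min k (min k₁ k₂) : ℕ) : ℝ) - 8 := by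
    exact_mod_cast hmax
  have hvanish : ∀ ξ : E3, 𝓕 ⇑u₂ ξ ≠ 0 →
      ∀ ζ : E3, 𝓕 ⇑φ (-ζ) * 𝓕 ⇑u₁ (ζ + ξ) = 0 := by
    intro ξ hξ ζ
    by_cases h1 : 𝓕 ⇑φ (-ζ) = 0
    · rw [h1, zero_mul]
    by_cases h2 : 𝓕 ⇑u₁ (ζ + ξ) = 0
    · rw [h2, mul_zero]
    exfalso
    have m1 : -ζ ∈ Ak k ∩ Bsj 1 j := hφ (Function.mem_support.2 h1)
    have m2 : ζ + ξ ∈ Ak k₁ ∩ Bsj s₁ j₁ := hu₁ (Function.mem_support.2 h2)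
    have m3 : ξ ∈ Ak k₂ ∩ Bsj s₂ j₂ := hu₂ (Function.mem_support.2 hξ)
    have heq : -ζ + (ζ + ξ) = ξ := by abel
    exact Stmt8Aux3.stepA hs₁ hs₂ hmax' m1 m2 (by rw [heq]; exact m3)
  have key : ∀ ξ : E3, 𝓕 (fun z => φ z * u₁ z) ξ * (starRingEnd ℂ) (𝓕 ⇑u₂ ξ) = 0 := by
    intro ξ
    by_cases h0 : 𝓕 ⇑u₂ ξ = 0
    · rw [h0, map_zero, mul_zero]
    · rw [Stmt8Fourier.fourier_mul_eq φ u₁ ξ]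
      have hz : (fun ζ => 𝓕 ⇑φ (-ζ) * 𝓕 ⇑u₁ (ζ + ξ)) = fun _ => (0 : ℂ) :=
        funext (hvanish ξ h0)
      rw [hz, integral_zero, zero_mul]
  have hF : Integrable (fun z => φ z * u₁ z) := Stmt8Fourier.schwartz_bdd_mul φ u₁.integrable
  have hgc : Integrable (fun ζ => (starRingEnd ℂ) (𝓕 ⇑u₂ ζ)) :=
    Stmt8Fourier.integrable_conj' (Stmt8Fourier.schwartz_fourier_integrable u₂)
  calc ∫ z : E3, φ z * u₁ z * (starRingEnd ℂ) (u₂ z)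
      = ∫ z : E3, (φ z * u₁ z) * 𝓕 (fun ζ => (starRingEnd ℂ) (𝓕 ⇑u₂ ζ)) z := by
        congr 1
        funext z
        rw [Stmt8Fourier.fourier_conj u₂]
    _ = ∫ ξ : E3, 𝓕 (fun z => φ z * u₁ z) ξ * (starRingEnd ℂ) (𝓕 ⇑u₂ ξ) :=
        (Stmt8Fourier.mulform hF hgc).symm
    _ = 0 := by
        rw [show (fun ξ : E3 => 𝓕 (fun z => φ z * u₁ z) ξ * (starRingEnd ℂ) (𝓕 ⇑u₂ ξ))
          = fun _ => (0 : ℂ) from funext key, integral_zero]
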